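/- Let g : ℝ → ℝ be continuous with g(x) > 0 for all x, and ε ∈ {1, −1}. Suppose ψ : ℝ³ → ℂ is continuous, for every fixed (θ, x) the map φ ↦ ψ(θ, φ, x) is differentiable with ∂_φψ(θ,φ,x) = −ε · ψ(θ,φ,x) / g(x), and ψ is square integrable on ℝ³. Then ψ is identically zero. (Hence the deficiency equation φ̂₂ψ = ±iψ for the constraint operator φ̂₂ = −i g(x)∂_φ has no nonzero L² solutions, so both deficiency indices of φ̂₂ are zero.) -/

import Mathlib

open MeasureTheory

lemma ode_sol (k : ℂ) (h : ℝ → ℂ) (hd : ∀ t, HasDerivAt h (k * h t) t)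
    (t t0 : ℝ) : h t = h t0 * Complex.exp (k * (t - t0)) := by
  have hf : ∀ s : ℝ, HasDerivAt (fun u => h u * Complex.exp (-k * u)) 0 s := by
    intro s
    have he : HasDerivAt (fun u : ℝ => Complex.exp (-k * u)) (-k * Complex.exp (-k * s)) s := by
      have := ((hasDerivAt_id s).ofReal_comp.const_mul (-k)).cexp
      simpa [mul_comm] using this
    have : HasDerivAt (fun u => h u * Complex.exp (-k * u))
        (k * h s * Complex.exp (-k * s) + h s * (-k * Complex.exp (-k * s))) s := (hd s).mul he
    convert this using 1
    ring
  have hdiff : Differentiable ℝ (fun u => h u * Complex.exp (-k * u)) :=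
    fun s => (hf s).differentiableAt
  have hconst : ∀ s, (fun u => h u * Complex.exp (-k * u)) s
      = (fun u => h u * Complex.exp (-k * u)) t0 := by
    intro s
    apply is_const_of_deriv_eq_zero hdiff
    intro u
    exact (hf u).deriv
  have := hconst t
  have hne : Complex.exp (-k * t) ≠ 0 := Complex.exp_ne_zero _
  field_simp at this
  calc h t = (h t * Complex.exp (-(k * t))) * Complex.exp (k * t) := by
        rw [mul_assoc, ← Complex.exp_add]; simp
    _ = (h t0 * Complex.exp (-(k * t0))) * Complex.exp (k * t) := by rw [this]
    _ = h t0 * Complex.exp (k * (t - t0)) := by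
        rw [mul_assoc, ← Complex.exp_add]; ring_nf

theorem deficiency_indices_opPhi₂_zero
    (g : ℝ → ℝ) (hg : Continuous g) (hgpos : ∀ x, 0 < g x)
    (ε : ℝ) (hε : ε = 1 ∨ ε = -1)
    (ψ : ℝ × ℝ × ℝ → ℂ) (hψcont : Continuous ψ)
    (hode : ∀ θ φ x : ℝ, HasDerivAt (fun t => ψ (θ, t, x))
      (-(ε : ℂ) * ψ (θ, φ, x) / (g x : ℝ)) φ)
    (hL2 : Integrable (fun q : ℝ × ℝ × ℝ => ‖ψ q‖ ^ 2)) :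
    ∀ q : ℝ × ℝ × ℝ, ψ q = 0 := by
  rintro ⟨θ0, φ0, x0⟩
  by_contra hq0
  set c := ‖ψ (θ0, φ0, x0)‖ with hc
  have hcpos : 0 < c := norm_pos_iff.mpr hq0
  -- explicit solution
  have hsol : ∀ θ φ x : ℝ, ‖ψ (θ, φ, x)‖
      = ‖ψ (θ, φ0, x)‖ * Real.exp ((-ε / g x) * (φ - φ0)) := by
    intro θ φ x
    have hgne : (g x : ℂ) ≠ 0 := by
      exact_mod_cast (hgpos x).ne'
    have hd : ∀ t : ℝ, HasDerivAt (fun t => ψ (θ, t, x))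
        (((-ε / g x : ℝ) : ℂ) * ψ (θ, t, x)) t := by
      intro t
      have := hode θ t x
      convert this using 1
      push_cast
      field_simp
    have := ode_sol ((-ε / g x : ℝ) : ℂ) (fun t => ψ (θ, t, x)) hd φ φ0
    rw [this, norm_mul]
    congr 1
    rw [show ((-ε / g x : ℝ) : ℂ) * ((φ : ℂ) - (φ0 : ℂ))
        = (((-ε / g x) * (φ - φ0) : ℝ) : ℂ) by push_cast; ring]
    rw [Complex.norm_exp, Complex.ofReal_re]
  -- continuity neighborhood
  obtain ⟨δ, hδpos, hδ⟩ := Metric.continuousAt_iff.mp (hψcont.continuousAt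
    (x := (θ0, φ0, x0))) (c / 2) (by positivity)
  -- the half line
  obtain ⟨H, hHmeas, hHvol, hHsign⟩ : ∃ H : Set ℝ, MeasurableSet H ∧
      volume H = ⊤ ∧ ∀ φ ∈ H, ∀ x, 0 ≤ (-ε / g x) * (φ - φ0) := by
    rcases hε with h | h
    · refine ⟨Set.Iic φ0, measurableSet_Iic, Real.volume_Iic, fun φ hφ x => ?_⟩
      have h1 : 0 < 1 / g x := one_div_pos.mpr (hgpos x)
      have h2 : φ ≤ φ0 := hφ
      rw [h, show (-1 : ℝ) / g x * (φ - φ0) = 1 / g x * (φ0 - φ) from by ring]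
      exact mul_nonneg h1.le (by linarith)
    · refine ⟨Set.Ici φ0, measurableSet_Ici, Real.volume_Ici, fun φ hφ x => ?_⟩
      have h1 : 0 < 1 / g x := one_div_pos.mpr (hgpos x)
      have h2 : φ0 ≤ φ := hφ
      rw [h, show -(-1 : ℝ) / g x * (φ - φ0) = 1 / g x * (φ - φ0) from by ring]
      exact mul_nonneg h1.le (by linarith)
  set S : Set (ℝ × ℝ × ℝ) :=
    Set.Ioo (θ0 - δ/2) (θ0 + δ/2) ×ˢ H ×ˢ Set.Ioo (x0 - δ/2) (x0 + δ/2) with hS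
  -- lower bound on S
  have hlow : ∀ q ∈ S, (c / 2) ^ 2 ≤ ‖ψ q‖ ^ 2 := by
    rintro ⟨θ, φ, x⟩ ⟨hθ, hφ, hx⟩
    have hdist : dist ((θ, φ0, x) : ℝ × ℝ × ℝ) (θ0, φ0, x0) < δ := by
      simp only [Prod.dist_eq, Real.dist_eq]
      apply max_lt
      · rw [abs_sub_lt_iff]; constructor <;> [linarith [hθ.1, hθ.2]; linarith [hθ.1, hθ.2]]
      · apply max_lt
        · simpa using hδpos
        · rw [abs_sub_lt_iff]; constructor <;> [linarith [hx.1, hx.2]; linarith [hx.1, hx.2]]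
    have hnear := hδ hdist
    have hge : c / 2 ≤ ‖ψ (θ, φ0, x)‖ := by
      have := norm_sub_norm_le (ψ (θ0, φ0, x0)) (ψ (θ, φ0, x))
      rw [dist_eq_norm] at hnear
      rw [norm_sub_rev] at hnear
      linarith [hnear, this]
    have hexp : (1 : ℝ) ≤ Real.exp ((-ε / g x) * (φ - φ0)) :=
      Real.one_le_exp (hHsign φ hφ x)
    have : c / 2 ≤ ‖ψ (θ, φ, x)‖ := by
      rw [hsol θ φ x]
      calc c / 2 = c / 2 * 1 := by ring
        _ ≤ ‖ψ (θ, φ0, x)‖ * Real.exp ((-ε / g x) * (φ - φ0)) :=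
          mul_le_mul hge hexp zero_le_one (norm_nonneg _)
    exact pow_le_pow_left₀ (by positivity) this 2
  -- S has infinite measure
  have hSvol : volume S = ⊤ := by
    rw [hS, Measure.volume_eq_prod, Measure.prod_prod, Measure.volume_eq_prod,
      Measure.prod_prod, hHvol, Real.volume_Ioo, Real.volume_Ioo]
    rw [ENNReal.top_mul, ENNReal.mul_top]
    · simp only [ne_eq, ENNReal.ofReal_eq_zero, not_le]
      linarith
    · simp only [ne_eq, ENNReal.ofReal_eq_zero, not_le]
      linarith
  -- contradiction with integrability
  have hfin := hL2.measure_ge_lt_top (ε := (c / 2) ^ 2) (by positivity)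
  have hsub : S ⊆ {q : ℝ × ℝ × ℝ | (c / 2) ^ 2 ≤ ‖ψ q‖ ^ 2} := fun q hq => hlow q hq
  have := measure_mono (μ := (volume : Measure (ℝ × ℝ × ℝ))) hsub
  rw [hSvol] at this
  exact hfin.ne (eq_top_iff.mpr this)
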